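/- Equal reductions imply equal restricted quantum walks: if A and B are Hermitian matrices (possibly of different sizes) with index subsets S and T of the same cardinality such that R(λ, S, A) = R(λ, T, B) as rational matrix functions (for all λ in a common domain with nonempty interior, e.g., all non-real λ), then (e^{−itA})_{S,S} = (e^{−itB})_{T,T} for all real t (after identifying S with T). In particular, there is perfect state transfer between two vertices u,v ∈ S in A at time τ, i.e., e^{−iτA}e_u = γe_v for a unit complex γ, if and only if the same holds between the corresponding vertices of T in B. -/

import Mathlib

open Matrix

attribute [local instance] Matrix.linftyOpNormedAddCommGroup Matrix.linftyOpSemiNormedRing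
  Matrix.linftyOpNormedRing Matrix.linftyOpNormedAlgebra Matrix.linftyOpNormedSpace
  Matrix.linftyOpIsBoundedSMul

/-- Isospectral reduction of a matrix indexed by `α ⊕ β` down to `α`. -/
noncomputable def red {α β : Type} [Fintype α] [Fintype β] [DecidableEq α] [DecidableEq β]
    (lam : ℂ) (A : Matrix (α ⊕ β) (α ⊕ β) ℂ) : Matrix α α ℂ :=
  A.toBlocks₁₁ + A.toBlocks₁₂ * (lam • (1 : Matrix β β ℂ) - A.toBlocks₂₂)⁻¹ * A.toBlocks₂₁

lemma aux_norm_z (t : ℝ) (ht : 0 ≤ t) : ‖Complex.I * (t:ℂ)‖ = t := by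
  rw [norm_mul, Complex.norm_I, one_mul, Complex.norm_real, Real.norm_eq_abs, abs_of_nonneg ht]

lemma entry_norm_le {m n : Type} [Fintype m] [Fintype n] (M : Matrix m n ℂ) (i : m) (j : n) :
    ‖M i j‖ ≤ ‖M‖ := by
  rw [Matrix.linfty_opNorm_def]
  have h1 : ‖M i j‖₊ ≤ ∑ j', ‖M i j'‖₊ :=
    Finset.single_le_sum (f := fun j' => ‖M i j'‖₊) (fun _ _ => zero_le) (Finset.mem_univ j)
  have h2 : (∑ j', ‖M i j'‖₊) ≤ Finset.univ.sup fun i => ∑ j', ‖M i j'‖₊ :=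
    Finset.le_sup (f := fun i => ∑ j', ‖M i j'‖₊) (Finset.mem_univ i)
  exact_mod_cast h1.trans h2

lemma pow_norm_le {n' : Type} [Fintype n'] [DecidableEq n'] (M : Matrix n' n' ℂ) :
    ∀ k, ‖M ^ k‖ ≤ (‖M‖ + 1) ^ k
  | 0 => by
      rw [pow_zero, pow_zero, ← Matrix.diagonal_one, Matrix.linfty_opNorm_diagonal]
      refine (pi_norm_le_iff_of_nonneg zero_le_one).mpr fun i => by simp
  | (k+1) => by
      rw [pow_succ, pow_succ]
      calc ‖M^k * M‖ ≤ ‖M^k‖ * ‖M‖ := Matrix.linfty_opNorm_mul _ _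
        _ ≤ (‖M‖+1)^k * (‖M‖+1) :=
            mul_le_mul (pow_norm_le M k) (by linarith) (norm_nonneg M) (by positivity)

lemma aux_expand {α δ : Type} [Fintype α] [Fintype δ] [DecidableEq α] [DecidableEq δ]
    (M : Matrix (α ⊕ δ) (α ⊕ δ) ℂ) (t : ℝ) (ht : 0 < t)
    (hsm : t * (‖M.toBlocks₂₂‖ + 1) < 1) :
    ∃ W : Matrix α α ℂ,
      HasSum (fun k : ℕ => (Complex.I * (t:ℂ)) ^ k •
        (M.toBlocks₁₂ * M.toBlocks₂₂ ^ k * M.toBlocks₂₁)) W ∧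
      red ((Complex.I * (t:ℂ))⁻¹) M = M.toBlocks₁₁ + (Complex.I * (t:ℂ)) • W := by
  classical
  set z : ℂ := Complex.I * t with hzdef
  have hzn : ‖z‖ = t := aux_norm_z t ht.le
  have hz0 : z ≠ 0 := by intro h; rw [h, norm_zero] at hzn; linarith
  set N := M.toBlocks₂₂ with hN
  have hx : ‖z • N‖ < 1 := by
    rw [norm_smul, hzn]
    nlinarith [norm_nonneg N]
  have hg : Summable fun k : ℕ => (z • N) ^ k := summable_geometric_of_norm_lt_one hx
  set S := ∑' k : ℕ, (z • N) ^ k with hS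
  have hinv : ((z⁻¹ : ℂ) • (1 : Matrix δ δ ℂ) - N)⁻¹ = z • S := by
    apply Matrix.inv_eq_right_inv
    have hfact : (z⁻¹ : ℂ) • ((1 : Matrix δ δ ℂ) - z • N) = z⁻¹ • (1 : Matrix δ δ ℂ) - N := by
      rw [smul_sub, smul_smul, inv_mul_cancel₀ hz0, one_smul]
    rw [← hfact, smul_mul_assoc, mul_smul_comm, smul_smul, inv_mul_cancel₀ hz0, one_smul,
      hS]
    exact mul_neg_geom_series _ hx
  let L0 : Matrix δ δ ℂ →ₗ[ℂ] Matrix α α ℂ :=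
    { toFun := fun X => M.toBlocks₁₂ * X * M.toBlocks₂₁
      map_add' := fun X Y => by rw [Matrix.mul_add, Matrix.add_mul]
      map_smul' := fun a X => by rw [Matrix.mul_smul, Matrix.smul_mul, RingHom.id_apply] }
  let L := LinearMap.toContinuousLinearMap L0
  refine ⟨L S, ?_, ?_⟩
  · have h1 : HasSum (fun k : ℕ => L ((z • N) ^ k)) (L S) := hg.hasSum.mapL L
    have h2 : (fun k : ℕ => L ((z • N) ^ k)) =
        fun k : ℕ => z ^ k • (M.toBlocks₁₂ * N ^ k * M.toBlocks₂₁) := by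
      funext k
      rw [smul_pow, _root_.map_smul]
      rfl
    rwa [h2] at h1
  · show M.toBlocks₁₁ + M.toBlocks₁₂ * ((z⁻¹ : ℂ) • (1 : Matrix δ δ ℂ) - N)⁻¹ * M.toBlocks₂₁
      = M.toBlocks₁₁ + z • (L S)
    rw [hinv, Matrix.mul_smul, Matrix.smul_mul]
    rfl

lemma aux_coeff_zero (c : ℕ → ℂ) (C R : ℝ) (hR : 1 ≤ R)
    (hc : ∀ k, ‖c k‖ ≤ C * R ^ k)
    (h0 : ∀ t : ℝ, 0 < t → t < 1 / (2 * R) → ∑' k, c k * (Complex.I * t) ^ k = 0) :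
    ∀ k, c k = 0 := by
  have hR0 : (0:ℝ) < R := lt_of_lt_of_le one_pos hR
  have hC0 : (0:ℝ) ≤ C := by have h := (norm_nonneg (c 0)).trans (hc 0); simpa using h
  have hrt1 : ∀ t : ℝ, 0 < t → t < 1 / (2 * R) → R * t < 1/2 := by
    intro t ht ht'
    have h2R : (0:ℝ) < 2 * R := by positivity
    rw [lt_div_iff₀ h2R] at ht'
    nlinarith
  have hsum : ∀ (n : ℕ) (t : ℝ), 0 < t → t < 1 / (2 * R) →
      Summable fun k => ‖c (n + k) * (Complex.I * t) ^ k‖ := by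
    intro n t ht ht'
    have hrt : (0:ℝ) ≤ R * t := by positivity
    have h1 : R * t < 1 := (hrt1 t ht ht').trans (by norm_num)
    refine Summable.of_nonneg_of_le (fun k => norm_nonneg _) (fun k => ?_)
      ((summable_geometric_of_lt_one hrt h1).mul_left (C * R ^ n))
    rw [norm_mul, norm_pow, aux_norm_z t ht.le]
    calc ‖c (n+k)‖ * t ^ k ≤ (C * R ^ (n+k)) * t ^ k := by
          apply mul_le_mul_of_nonneg_right (hc _) (by positivity)
      _ = (C * R ^ n) * (R * t) ^ k := by ring
  have hsum' : ∀ (n : ℕ) (t : ℝ), 0 < t → t < 1 / (2 * R) →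
      Summable fun k => c (n + k) * (Complex.I * t) ^ k := by
    intro n t ht ht'
    exact Summable.of_norm (hsum n t ht ht')
  have key : ∀ n : ℕ, (∀ t : ℝ, 0 < t → t < 1 / (2 * R) →
        ∑' k, c (n + k) * (Complex.I * t) ^ k = 0) →
      c n = 0 ∧ ∀ t : ℝ, 0 < t → t < 1 / (2 * R) →
        ∑' k, c ((n+1) + k) * (Complex.I * t) ^ k = 0 := by
    intro n hP
    have tail_eq : ∀ t : ℝ, 0 < t → t < 1 / (2 * R) →
        c n + (Complex.I * t) * ∑' k, c ((n+1) + k) * (Complex.I * t) ^ k = 0 := by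
      intro t ht ht'
      have h1 := Summable.tsum_eq_zero_add (hsum' n t ht ht')
      have h2 : ∀ k : ℕ, c (n + (k+1)) * (Complex.I * t) ^ (k+1) =
          (Complex.I * t) * (c ((n+1) + k) * (Complex.I * t) ^ k) := by
        intro k
        have hnk : n + (k+1) = (n+1) + k := by omega
        rw [hnk]; ring
      rw [hP t ht ht'] at h1
      simp only [h2, Nat.add_zero, pow_zero, mul_one] at h1
      rw [tsum_mul_left] at h1
      linear_combination -h1
    -- bound on the tail
    have tail_bound : ∀ t : ℝ, 0 < t → t < 1 / (2 * R) →
        ‖∑' k, c ((n+1) + k) * (Complex.I * t) ^ k‖ ≤ 2 * (C * R ^ (n+1)) := by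
      intro t ht ht'
      have hrt : (0:ℝ) ≤ R * t := by positivity
      have h1 : R * t < 1 := (hrt1 t ht ht').trans (by norm_num)
      calc ‖∑' k, c ((n+1) + k) * (Complex.I * t) ^ k‖
          ≤ ∑' k, ‖c ((n+1) + k) * (Complex.I * t) ^ k‖ :=
            norm_tsum_le_tsum_norm (hsum (n+1) t ht ht')
        _ ≤ ∑' k, (C * R ^ (n+1)) * (R * t) ^ k := by
            refine Summable.tsum_le_tsum (fun k => ?_) (hsum (n+1) t ht ht')
              (((summable_geometric_of_lt_one hrt h1)).mul_left _)
            rw [norm_mul, norm_pow, aux_norm_z t ht.le]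
            calc ‖c ((n+1)+k)‖ * t ^ k ≤ (C * R ^ ((n+1)+k)) * t ^ k := by
                  apply mul_le_mul_of_nonneg_right (hc _) (by positivity)
              _ = (C * R ^ (n+1)) * (R * t) ^ k := by ring
        _ = (C * R ^ (n+1)) * (1 - R*t)⁻¹ := by
            rw [tsum_mul_left, tsum_geometric_of_lt_one hrt h1]
        _ ≤ (C * R ^ (n+1)) * 2 := by
            apply mul_le_mul_of_nonneg_left _ (by positivity)
            rw [inv_le_comm₀ (by linarith [hrt1 t ht ht']) (by norm_num)]
            linarith [hrt1 t ht ht']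
        _ = 2 * (C * R ^ (n+1)) := by ring
    have hcn : c n = 0 := by
      by_contra hne
      set K : ℝ := 2 * (C * R ^ (n+1)) with hK
      have hKpos : 0 ≤ K := by positivity
      set t : ℝ := min (1 / (4*R)) (‖c n‖ / (2*(K+1))) with htdef
      have hcpos : 0 < ‖c n‖ := norm_pos_iff.mpr hne
      have ht : 0 < t := lt_min (by positivity) (by positivity)
      have ht' : t < 1 / (2*R) := lt_of_le_of_lt (min_le_left _ _) (by
        rw [div_lt_div_iff₀ (by positivity) (by positivity)]; nlinarith)
      have hb := tail_eq t ht ht'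
      have : ‖c n‖ = ‖(Complex.I * t) * ∑' k, c ((n+1) + k) * (Complex.I * t) ^ k‖ := by
        have : c n = -((Complex.I * t) * ∑' k, c ((n+1) + k) * (Complex.I * t) ^ k) := by
          linear_combination hb
        rw [this, norm_neg]
      rw [norm_mul, aux_norm_z t ht.le] at this
      have hle : ‖c n‖ ≤ t * K :=
        this.le.trans (mul_le_mul_of_nonneg_left (tail_bound t ht ht') ht.le)
      have htle : t ≤ ‖c n‖ / (2*(K+1)) := min_le_right _ _
      have : t * K ≤ (‖c n‖ / (2*(K+1))) * K := mul_le_mul_of_nonneg_right htle hKpos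
      have hlt : (‖c n‖ / (2*(K+1))) * K < ‖c n‖ := by
        rw [div_mul_eq_mul_div, div_lt_iff₀ (by positivity)]
        nlinarith
      linarith
    refine ⟨hcn, fun t ht ht' => ?_⟩
    have hb := tail_eq t ht ht'
    rw [hcn, zero_add] at hb
    have hz : (Complex.I * (t:ℂ)) ≠ 0 := by
      intro h
      have := congrArg norm h
      rw [aux_norm_z t ht.le, norm_zero] at this
      linarith
    exact (mul_eq_zero.mp hb).resolve_left hz
  have main : ∀ n : ℕ, ∀ t : ℝ, 0 < t → t < 1 / (2 * R) →
      ∑' k, c (n + k) * (Complex.I * t) ^ k = 0 := by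
    intro n
    induction n with
    | zero => intro t ht ht'; simpa using h0 t ht ht'
    | succ n ih => exact (key n ih).2
  intro k
  exact (key k (main k)).1

lemma blocks_eq {α β γ : Type} [Fintype α] [Fintype β] [Fintype γ]
    [DecidableEq α] [DecidableEq β] [DecidableEq γ]
    (A : Matrix (α ⊕ β) (α ⊕ β) ℂ) (B : Matrix (α ⊕ γ) (α ⊕ γ) ℂ)
    (heq : ∀ lam : ℂ, lam.im ≠ 0 → red lam A = red lam B) :
    A.toBlocks₁₁ = B.toBlocks₁₁ ∧
      ∀ k, A.toBlocks₁₂ * A.toBlocks₂₂ ^ k * A.toBlocks₂₁ =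
        B.toBlocks₁₂ * B.toBlocks₂₂ ^ k * B.toBlocks₂₁ := by
  classical
  set R : ℝ := ‖A.toBlocks₂₂‖ + ‖B.toBlocks₂₂‖ + 2 with hRdef
  set C : ℝ := ‖A.toBlocks₁₁‖ + ‖B.toBlocks₁₁‖ + ‖A.toBlocks₁₂‖ * ‖A.toBlocks₂₁‖ +
    ‖B.toBlocks₁₂‖ * ‖B.toBlocks₂₁‖ + 1 with hCdef
  have hR1 : (1:ℝ) ≤ R := by
    nlinarith [norm_nonneg A.toBlocks₂₂, norm_nonneg B.toBlocks₂₂]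
  have main : ∀ i j : α, (A.toBlocks₁₁ i j - B.toBlocks₁₁ i j = 0) ∧
      ∀ k, (A.toBlocks₁₂ * A.toBlocks₂₂ ^ k * A.toBlocks₂₁ : Matrix α α ℂ) i j -
        (B.toBlocks₁₂ * B.toBlocks₂₂ ^ k * B.toBlocks₂₁ : Matrix α α ℂ) i j = 0 := by
    intro i j
    set c : ℕ → ℂ := fun k => Nat.casesOn k (A.toBlocks₁₁ i j - B.toBlocks₁₁ i j)
      (fun k' => (A.toBlocks₁₂ * A.toBlocks₂₂ ^ k' * A.toBlocks₂₁) i j -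
        (B.toBlocks₁₂ * B.toBlocks₂₂ ^ k' * B.toBlocks₂₁) i j) with hcdef
    have hzero : ∀ k, c k = 0 := by
      apply aux_coeff_zero c C R hR1
      · intro k
        cases k with
        | zero =>
          show ‖A.toBlocks₁₁ i j - B.toBlocks₁₁ i j‖ ≤ C * R ^ 0
          rw [pow_zero, mul_one]
          have h1 := norm_sub_le (A.toBlocks₁₁ i j) (B.toBlocks₁₁ i j)
          have h2 := entry_norm_le A.toBlocks₁₁ i j
          have h3 := entry_norm_le B.toBlocks₁₁ i j
          have h4 : (0:ℝ) ≤ ‖A.toBlocks₁₂‖ * ‖A.toBlocks₂₁‖ := by positivity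
          have h5 : (0:ℝ) ≤ ‖B.toBlocks₁₂‖ * ‖B.toBlocks₂₁‖ := by positivity
          rw [hCdef]; linarith
        | succ k =>
          show ‖(A.toBlocks₁₂ * A.toBlocks₂₂ ^ k * A.toBlocks₂₁) i j -
            (B.toBlocks₁₂ * B.toBlocks₂₂ ^ k * B.toBlocks₂₁) i j‖ ≤ C * R ^ (k+1)
          have hMA : ‖A.toBlocks₁₂ * A.toBlocks₂₂ ^ k * A.toBlocks₂₁‖ ≤
              (‖A.toBlocks₁₂‖ * ‖A.toBlocks₂₁‖) * (‖A.toBlocks₂₂‖ + 1) ^ k := by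
            calc ‖A.toBlocks₁₂ * A.toBlocks₂₂ ^ k * A.toBlocks₂₁‖
                ≤ ‖A.toBlocks₁₂ * A.toBlocks₂₂ ^ k‖ * ‖A.toBlocks₂₁‖ :=
                  Matrix.linfty_opNorm_mul _ _
              _ ≤ (‖A.toBlocks₁₂‖ * ‖A.toBlocks₂₂ ^ k‖) * ‖A.toBlocks₂₁‖ :=
                  mul_le_mul_of_nonneg_right (Matrix.linfty_opNorm_mul _ _) (norm_nonneg _)
              _ ≤ (‖A.toBlocks₁₂‖ * (‖A.toBlocks₂₂‖ + 1) ^ k) * ‖A.toBlocks₂₁‖ := by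
                  exact mul_le_mul_of_nonneg_right
                    (mul_le_mul_of_nonneg_left (pow_norm_le A.toBlocks₂₂ k)
                      (norm_nonneg A.toBlocks₁₂)) (norm_nonneg A.toBlocks₂₁)
              _ = (‖A.toBlocks₁₂‖ * ‖A.toBlocks₂₁‖) * (‖A.toBlocks₂₂‖ + 1) ^ k := by ring
          have hMB : ‖B.toBlocks₁₂ * B.toBlocks₂₂ ^ k * B.toBlocks₂₁‖ ≤
              (‖B.toBlocks₁₂‖ * ‖B.toBlocks₂₁‖) * (‖B.toBlocks₂₂‖ + 1) ^ k := by
            calc ‖B.toBlocks₁₂ * B.toBlocks₂₂ ^ k * B.toBlocks₂₁‖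
                ≤ ‖B.toBlocks₁₂ * B.toBlocks₂₂ ^ k‖ * ‖B.toBlocks₂₁‖ :=
                  Matrix.linfty_opNorm_mul _ _
              _ ≤ (‖B.toBlocks₁₂‖ * ‖B.toBlocks₂₂ ^ k‖) * ‖B.toBlocks₂₁‖ :=
                  mul_le_mul_of_nonneg_right (Matrix.linfty_opNorm_mul _ _) (norm_nonneg _)
              _ ≤ (‖B.toBlocks₁₂‖ * (‖B.toBlocks₂₂‖ + 1) ^ k) * ‖B.toBlocks₂₁‖ := by
                  exact mul_le_mul_of_nonneg_right
                    (mul_le_mul_of_nonneg_left (pow_norm_le B.toBlocks₂₂ k)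
                      (norm_nonneg B.toBlocks₁₂)) (norm_nonneg B.toBlocks₂₁)
              _ = (‖B.toBlocks₁₂‖ * ‖B.toBlocks₂₁‖) * (‖B.toBlocks₂₂‖ + 1) ^ k := by ring
          have hpowA : (‖A.toBlocks₂₂‖ + 1) ^ k ≤ R ^ k := by
            apply pow_le_pow_left₀ (by positivity)
            nlinarith [norm_nonneg B.toBlocks₂₂]
          have hpowB : (‖B.toBlocks₂₂‖ + 1) ^ k ≤ R ^ k := by
            apply pow_le_pow_left₀ (by positivity)
            nlinarith [norm_nonneg A.toBlocks₂₂]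
          have hRk : (0:ℝ) < R ^ k := by positivity
          have hRk1 : R ^ k ≤ R ^ (k+1) := by
            calc R ^ k = R ^ k * 1 := (mul_one _).symm
              _ ≤ R ^ k * R := by nlinarith
              _ = R ^ (k+1) := by ring
          have e1 := entry_norm_le (A.toBlocks₁₂ * A.toBlocks₂₂ ^ k * A.toBlocks₂₁) i j
          have e2 := entry_norm_le (B.toBlocks₁₂ * B.toBlocks₂₂ ^ k * B.toBlocks₂₁) i j
          have hns := norm_sub_le ((A.toBlocks₁₂ * A.toBlocks₂₂ ^ k * A.toBlocks₂₁) i j)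
            ((B.toBlocks₁₂ * B.toBlocks₂₂ ^ k * B.toBlocks₂₁) i j)
          have hC1 : ‖A.toBlocks₁₂‖ * ‖A.toBlocks₂₁‖ + ‖B.toBlocks₁₂‖ * ‖B.toBlocks₂₁‖ ≤ C := by
            have h2 := norm_nonneg A.toBlocks₁₁
            have h3 := norm_nonneg B.toBlocks₁₁
            rw [hCdef]; linarith
          have hCpos : (0:ℝ) ≤ ‖A.toBlocks₁₂‖ * ‖A.toBlocks₂₁‖ + ‖B.toBlocks₁₂‖ * ‖B.toBlocks₂₁‖ := by
            positivity
          calc ‖(A.toBlocks₁₂ * A.toBlocks₂₂ ^ k * A.toBlocks₂₁) i j -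
              (B.toBlocks₁₂ * B.toBlocks₂₂ ^ k * B.toBlocks₂₁) i j‖
              ≤ (‖A.toBlocks₁₂‖ * ‖A.toBlocks₂₁‖) * (‖A.toBlocks₂₂‖ + 1) ^ k +
                (‖B.toBlocks₁₂‖ * ‖B.toBlocks₂₁‖) * (‖B.toBlocks₂₂‖ + 1) ^ k := by linarith
            _ ≤ (‖A.toBlocks₁₂‖ * ‖A.toBlocks₂₁‖) * R ^ k +
                (‖B.toBlocks₁₂‖ * ‖B.toBlocks₂₁‖) * R ^ k := by
                have p1 : (0:ℝ) ≤ ‖A.toBlocks₁₂‖ * ‖A.toBlocks₂₁‖ := by positivity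
                have p2 : (0:ℝ) ≤ ‖B.toBlocks₁₂‖ * ‖B.toBlocks₂₁‖ := by positivity
                nlinarith
            _ = (‖A.toBlocks₁₂‖ * ‖A.toBlocks₂₁‖ + ‖B.toBlocks₁₂‖ * ‖B.toBlocks₂₁‖) * R ^ k := by
                ring
            _ ≤ C * R ^ k := mul_le_mul_of_nonneg_right hC1 hRk.le
            _ ≤ C * R ^ (k+1) := by
                have hC0 : (0:ℝ) ≤ C := hCpos.trans hC1
                nlinarith
      · intro t ht ht'
        have h2R : (0:ℝ) < 2 * R := by linarith
        have htR : t * R < 1/2 := by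
          rw [lt_div_iff₀ h2R] at ht'
          nlinarith
        have hsmA : t * (‖A.toBlocks₂₂‖ + 1) < 1 := by
          nlinarith [norm_nonneg B.toBlocks₂₂, norm_nonneg A.toBlocks₂₂]
        have hsmB : t * (‖B.toBlocks₂₂‖ + 1) < 1 := by
          nlinarith [norm_nonneg B.toBlocks₂₂, norm_nonneg A.toBlocks₂₂]
        obtain ⟨WA, hWA, hredA⟩ := aux_expand A t ht hsmA
        obtain ⟨WB, hWB, hredB⟩ := aux_expand B t ht hsmB
        set z : ℂ := Complex.I * (t:ℂ) with hzdef
        have hzim : z.im = t := by simp [hzdef]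
        have hz0 : z ≠ 0 := by
          intro h
          rw [h] at hzim
          simp at hzim
          linarith
        have him : (z⁻¹).im ≠ 0 := by
          intro h0
          rw [Complex.inv_im, hzim] at h0
          have hns : Complex.normSq z ≠ 0 := by simpa [Complex.normSq_eq_zero] using hz0
          rw [div_eq_zero_iff] at h0
          rcases h0 with h0 | h0
          · rw [neg_eq_zero] at h0; linarith
          · exact hns h0
        have hred := heq z⁻¹ him
        rw [hredA, hredB] at hred
        -- entry evaluation
        let E0 : Matrix α α ℂ →ₗ[ℂ] ℂ :=
          { toFun := fun X => X i j
            map_add' := fun X Y => rfl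
            map_smul' := fun a X => rfl }
        let E := LinearMap.toContinuousLinearMap E0
        have hA' : HasSum (fun k : ℕ => z ^ k *
            ((A.toBlocks₁₂ * A.toBlocks₂₂ ^ k * A.toBlocks₂₁) i j)) (E WA) := by
          have h1 := hWA.mapL E
          convert h1 using 1
          · rfl
          funext k; rfl
        have hB' : HasSum (fun k : ℕ => z ^ k *
            ((B.toBlocks₁₂ * B.toBlocks₂₂ ^ k * B.toBlocks₂₁) i j)) (E WB) := by
          have h1 := hWB.mapL E
          convert h1 using 1
          · rfl
          funext k; rfl
        have hentry : A.toBlocks₁₁ i j + z * E WA = B.toBlocks₁₁ i j + z * E WB := by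
          have h1 := congrFun (congrFun hred i) j
          simp [Matrix.add_apply, Pi.smul_apply, smul_eq_mul] at h1
          exact h1
        have hshift : HasSum (fun k : ℕ => c (k+1) * z ^ (k+1)) (z * E WA - z * E WB) := by
          have hd := hA'.sub hB'
          have hm := hd.mul_left z
          rw [mul_sub] at hm
          convert hm using 2 with k
          show ((A.toBlocks₁₂ * A.toBlocks₂₂ ^ k * A.toBlocks₂₁) i j -
            (B.toBlocks₁₂ * B.toBlocks₂₂ ^ k * B.toBlocks₂₁) i j) * z ^ (k+1) = _
          ring
          rfl
        have hfull : HasSum (fun k : ℕ => c k * z ^ k) 0 := by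
          have h3 := (hasSum_nat_add_iff (f := fun k : ℕ => c k * z ^ k) 1).mp hshift
          have h4 : (z * E WA - z * E WB) + ∑ i' ∈ Finset.range 1, c i' * z ^ i' = 0 := by
            simp only [Finset.sum_range_one, pow_zero, mul_one]
            show (z * E WA - z * E WB) + (A.toBlocks₁₁ i j - B.toBlocks₁₁ i j) = 0
            linear_combination hentry
          rwa [h4] at h3
        exact hfull.tsum_eq
    refine ⟨hzero 0, fun k => hzero (k+1)⟩
  constructor
  · ext i j
    have := (main i j).1
    exact sub_eq_zero.mp this
  · intro k
    ext i j
    exact sub_eq_zero.mp ((main i j).2 k)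

lemma mul_toBlocks₁₁ {α β : Type} [Fintype α] [Fintype β]
    (X Y : Matrix (α ⊕ β) (α ⊕ β) ℂ) :
    (X * Y).toBlocks₁₁ = X.toBlocks₁₁ * Y.toBlocks₁₁ + X.toBlocks₁₂ * Y.toBlocks₂₁ := by
  conv_lhs => rw [← Matrix.fromBlocks_toBlocks X, ← Matrix.fromBlocks_toBlocks Y,
    Matrix.fromBlocks_multiply]
  rw [Matrix.toBlocks_fromBlocks₁₁]

lemma mul_toBlocks₁₂ {α β : Type} [Fintype α] [Fintype β]
    (X Y : Matrix (α ⊕ β) (α ⊕ β) ℂ) :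
    (X * Y).toBlocks₁₂ = X.toBlocks₁₁ * Y.toBlocks₁₂ + X.toBlocks₁₂ * Y.toBlocks₂₂ := by
  conv_lhs => rw [← Matrix.fromBlocks_toBlocks X, ← Matrix.fromBlocks_toBlocks Y,
    Matrix.fromBlocks_multiply]
  rw [Matrix.toBlocks_fromBlocks₁₂]

lemma one_toBlocks₁₁ {α β : Type} [Fintype α] [Fintype β] [DecidableEq α] [DecidableEq β] :
    (1 : Matrix (α ⊕ β) (α ⊕ β) ℂ).toBlocks₁₁ = 1 := by
  ext i j
  simp [Matrix.toBlocks₁₁, Matrix.one_apply, Sum.inl.injEq]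

lemma one_toBlocks₁₂ {α β : Type} [Fintype α] [Fintype β] [DecidableEq α] [DecidableEq β] :
    (1 : Matrix (α ⊕ β) (α ⊕ β) ℂ).toBlocks₁₂ = 0 := by
  ext i j
  simp [Matrix.toBlocks₁₂, Matrix.one_apply]

lemma pow_blocks_eq {α β γ : Type} [Fintype α] [Fintype β] [Fintype γ]
    [DecidableEq α] [DecidableEq β] [DecidableEq γ]
    (A : Matrix (α ⊕ β) (α ⊕ β) ℂ) (B : Matrix (α ⊕ γ) (α ⊕ γ) ℂ)
    (h11 : A.toBlocks₁₁ = B.toBlocks₁₁)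
    (hM : ∀ k, A.toBlocks₁₂ * A.toBlocks₂₂ ^ k * A.toBlocks₂₁ =
      B.toBlocks₁₂ * B.toBlocks₂₂ ^ k * B.toBlocks₂₁) :
    ∀ m, ((A ^ m).toBlocks₁₁ = (B ^ m).toBlocks₁₁) ∧
      ∀ k, (A ^ m).toBlocks₁₂ * A.toBlocks₂₂ ^ k * A.toBlocks₂₁ =
        (B ^ m).toBlocks₁₂ * B.toBlocks₂₂ ^ k * B.toBlocks₂₁ := by
  intro m
  induction m with
  | zero =>
    refine ⟨by rw [pow_zero, pow_zero, one_toBlocks₁₁, one_toBlocks₁₁], fun k => ?_⟩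
    rw [pow_zero, pow_zero, one_toBlocks₁₂, one_toBlocks₁₂]
    simp
  | succ m ih =>
    obtain ⟨ih1, ih2⟩ := ih
    constructor
    · rw [pow_succ, pow_succ, mul_toBlocks₁₁, mul_toBlocks₁₁, ih1, h11]
      congr 1
      have h0 := ih2 0
      rwa [pow_zero, pow_zero, Matrix.mul_one, Matrix.mul_one] at h0
    · intro k
      rw [pow_succ, pow_succ, mul_toBlocks₁₂, mul_toBlocks₁₂,
        Matrix.add_mul, Matrix.add_mul, Matrix.add_mul, Matrix.add_mul]
      congr 1
      · rw [Matrix.mul_assoc ((A ^ m).toBlocks₁₁), Matrix.mul_assoc ((A ^ m).toBlocks₁₁),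
          Matrix.mul_assoc ((B ^ m).toBlocks₁₁), Matrix.mul_assoc ((B ^ m).toBlocks₁₁),
          ih1, hM k]
      · have hstep : (A ^ m).toBlocks₁₂ * A.toBlocks₂₂ * A.toBlocks₂₂ ^ k =
            (A ^ m).toBlocks₁₂ * A.toBlocks₂₂ ^ (k + 1) := by
          rw [Matrix.mul_assoc, ← pow_succ']
        have hstepB : (B ^ m).toBlocks₁₂ * B.toBlocks₂₂ * B.toBlocks₂₂ ^ k =
            (B ^ m).toBlocks₁₂ * B.toBlocks₂₂ ^ (k + 1) := by
          rw [Matrix.mul_assoc, ← pow_succ']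
        rw [hstep, hstepB]
        exact ih2 (k + 1)

lemma exp_blocks {α β γ : Type} [Fintype α] [Fintype β] [Fintype γ]
    [DecidableEq α] [DecidableEq β] [DecidableEq γ]
    (A : Matrix (α ⊕ β) (α ⊕ β) ℂ) (B : Matrix (α ⊕ γ) (α ⊕ γ) ℂ)
    (hpow : ∀ m, (A ^ m).toBlocks₁₁ = (B ^ m).toBlocks₁₁) (w : ℂ) :
    (NormedSpace.exp (w • A)).toBlocks₁₁ = (NormedSpace.exp (w • B)).toBlocks₁₁ := by
  classical
  have hsA : Summable fun n : ℕ => (Nat.factorial n : ℂ)⁻¹ • (w • A) ^ n :=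
    NormedSpace.expSeries_summable' (𝕂 := ℂ) (w • A)
  have hsB : Summable fun n : ℕ => (Nat.factorial n : ℂ)⁻¹ • (w • B) ^ n :=
    NormedSpace.expSeries_summable' (𝕂 := ℂ) (w • B)
  ext i j
  show (NormedSpace.exp (w • A)) (Sum.inl i) (Sum.inl j) =
    (NormedSpace.exp (w • B)) (Sum.inl i) (Sum.inl j)
  rw [NormedSpace.exp_eq_tsum ℂ, NormedSpace.exp_eq_tsum ℂ]
  let EA : Matrix (α ⊕ β) (α ⊕ β) ℂ →ₗ[ℂ] ℂ :=
    { toFun := fun X => X (Sum.inl i) (Sum.inl j)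
      map_add' := fun X Y => rfl
      map_smul' := fun a X => rfl }
  let EB : Matrix (α ⊕ γ) (α ⊕ γ) ℂ →ₗ[ℂ] ℂ :=
    { toFun := fun X => X (Sum.inl i) (Sum.inl j)
      map_add' := fun X Y => rfl
      map_smul' := fun a X => rfl }
  have h1 := hsA.hasSum.mapL (LinearMap.toContinuousLinearMap EA)
  have h2 := hsB.hasSum.mapL (LinearMap.toContinuousLinearMap EB)
  have hfun : (fun n : ℕ => (LinearMap.toContinuousLinearMap EA) ((Nat.factorial n : ℂ)⁻¹ • (w • A) ^ n)) =
      (fun n : ℕ => (LinearMap.toContinuousLinearMap EB) ((Nat.factorial n : ℂ)⁻¹ • (w • B) ^ n)) := by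
    funext n
    show ((Nat.factorial n : ℂ)⁻¹ • (w • A) ^ n) (Sum.inl i) (Sum.inl j) =
      ((Nat.factorial n : ℂ)⁻¹ • (w • B) ^ n) (Sum.inl i) (Sum.inl j)
    have hAB : (A ^ n) (Sum.inl i) (Sum.inl j) = (B ^ n) (Sum.inl i) (Sum.inl j) := by
      have := congrFun (congrFun (hpow n) i) j
      simpa [Matrix.toBlocks₁₁] using this
    rw [smul_pow, smul_pow]
    simp only [Pi.smul_apply, Matrix.smul_apply, smul_eq_mul]
    rw [hAB]
  rw [hfun] at h1
  exact h1.unique h2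

lemma exp_skew_unitary {n' : Type} [Fintype n'] [DecidableEq n'] (M : Matrix n' n' ℂ)
    (hM : Mᴴ = -M) :
    (NormedSpace.exp M)ᴴ * NormedSpace.exp M = 1 := by
  rw [← Matrix.exp_conjTranspose, hM,
    ← Matrix.exp_add_of_commute (-M) M ((Commute.refl M).neg_left),
    neg_add_cancel, NormedSpace.exp_zero]

lemma col_norm_one {n' : Type} [Fintype n'] [DecidableEq n'] (U : Matrix n' n' ℂ)
    (hU : Uᴴ * U = 1) (x : n') :
    ∑ j, Complex.normSq (U j x) = 1 := by
  have h := congrFun (congrFun hU x) x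
  have h1 : ∑ j, (starRingEnd ℂ) (U j x) * U j x = 1 := by
    simpa [Matrix.mul_apply, Matrix.conjTranspose_apply, Matrix.one_apply_eq] using h
  have h2 : ((∑ j, Complex.normSq (U j x) : ℝ) : ℂ) = 1 := by
    push_cast
    rw [← h1]
    congr 1
    funext jj
    rw [mul_comm, Complex.mul_conj]
  exact_mod_cast h2

lemma pst_transfer {α β γ : Type} [Fintype α] [Fintype β] [Fintype γ]
    [DecidableEq α] [DecidableEq β] [DecidableEq γ]
    (U : Matrix (α ⊕ β) (α ⊕ β) ℂ) (V : Matrix (α ⊕ γ) (α ⊕ γ) ℂ)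
    (hV : Vᴴ * V = 1) (hblk : U.toBlocks₁₁ = V.toBlocks₁₁) (u v : α) (g : ℂ)
    (hg : ‖g‖ = 1)
    (h : U.mulVec (Pi.single (Sum.inl u) 1 : (α ⊕ β) → ℂ) =
      g • (Pi.single (Sum.inl v) 1 : (α ⊕ β) → ℂ)) :
    V.mulVec (Pi.single (Sum.inl u) 1 : (α ⊕ γ) → ℂ) =
      g • (Pi.single (Sum.inl v) 1 : (α ⊕ γ) → ℂ) := by
  classical
  have hcolU : ∀ jj, U jj (Sum.inl u) = g * (Pi.single (Sum.inl v) 1 : (α ⊕ β) → ℂ) jj := by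
    intro jj
    have h' := congrFun h jj
    simpa [Matrix.mulVec_single] using h'
  have hVcol_inl : ∀ i : α, V (Sum.inl i) (Sum.inl u) = if i = v then g else 0 := by
    intro i
    have h1 : U (Sum.inl i) (Sum.inl u) = V (Sum.inl i) (Sum.inl u) := by
      have h2 := congrFun (congrFun hblk i) u
      simpa [Matrix.toBlocks₁₁] using h2
    rw [← h1, hcolU]
    simp [Pi.single_apply, Sum.inl.injEq, mul_ite, mul_one, mul_zero]
  have hsum := col_norm_one V hV (Sum.inl u)
  rw [Fintype.sum_sum_type] at hsum
  have hfirst : ∑ i : α, Complex.normSq (V (Sum.inl i) (Sum.inl u)) = 1 := by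
    have hterm : ∀ i : α, Complex.normSq (V (Sum.inl i) (Sum.inl u)) =
        if i = v then Complex.normSq g else 0 := by
      intro i
      rw [hVcol_inl i]
      split_ifs <;> simp
    rw [Finset.sum_congr rfl (fun i _ => hterm i), Finset.sum_ite_eq' Finset.univ v]
    simp only [Finset.mem_univ, if_true]
    rw [Complex.normSq_eq_norm_sq, hg, one_pow]
  have hrest : ∑ jj : γ, Complex.normSq (V (Sum.inr jj) (Sum.inl u)) = 0 := by linarith
  have hzero : ∀ jj : γ, V (Sum.inr jj) (Sum.inl u) = 0 := by
    intro jj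
    have := (Finset.sum_eq_zero_iff_of_nonneg
      (fun _ _ => Complex.normSq_nonneg _)).mp hrest jj (Finset.mem_univ jj)
    exact Complex.normSq_eq_zero.mp this
  funext jj
  have hlhs : V.mulVec (Pi.single (Sum.inl u) 1) jj = V jj (Sum.inl u) := by
    simp [Matrix.mulVec_single]
  rw [hlhs]
  cases jj with
  | inl i =>
    rw [hVcol_inl i]
    simp only [Pi.smul_apply, Pi.single_apply, smul_eq_mul, Sum.inl.injEq]
    split_ifs <;> simp
  | inr i =>
    rw [hzero i]
    simp [Pi.single_apply]

theorem stmt_18 (s b c : ℕ)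
    (A : Matrix (Fin s ⊕ Fin b) (Fin s ⊕ Fin b) ℂ)
    (B : Matrix (Fin s ⊕ Fin c) (Fin s ⊕ Fin c) ℂ)
    (hA : A.IsHermitian) (hB : B.IsHermitian)
    -- the isospectral reductions agree (as rational functions: on all non-real `λ`)
    (heq : ∀ lam : ℂ, lam.im ≠ 0 → red lam A = red lam B) :
    (∀ t : ℝ,
      (NormedSpace.exp ((-(Complex.I * t)) • A)).toBlocks₁₁ =
        (NormedSpace.exp ((-(Complex.I * t)) • B)).toBlocks₁₁) ∧
    -- in particular, perfect state transfer happens in `A` iff it happens in `B`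
    (∀ (τ : ℝ) (u v : Fin s),
      (∃ γ : ℂ, ‖γ‖ = 1 ∧
        (NormedSpace.exp ((-(Complex.I * τ)) • A)).mulVec
            (Pi.single (Sum.inl u) 1 : (Fin s ⊕ Fin b) → ℂ) =
          γ • (Pi.single (Sum.inl v) 1 : (Fin s ⊕ Fin b) → ℂ)) ↔
      (∃ γ : ℂ, ‖γ‖ = 1 ∧
        (NormedSpace.exp ((-(Complex.I * τ)) • B)).mulVec
            (Pi.single (Sum.inl u) 1 : (Fin s ⊕ Fin c) → ℂ) =
          γ • (Pi.single (Sum.inl v) 1 : (Fin s ⊕ Fin c) → ℂ))) := by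
  obtain ⟨h11, hM⟩ := blocks_eq A B heq
  have hpow := pow_blocks_eq A B h11 hM
  have hexp : ∀ t : ℝ, (NormedSpace.exp ((-(Complex.I * t)) • A)).toBlocks₁₁ =
      (NormedSpace.exp ((-(Complex.I * t)) • B)).toBlocks₁₁ :=
    fun t => exp_blocks A B (fun m => (hpow m).1) (-(Complex.I * t))
  refine ⟨hexp, fun τ u v => ?_⟩
  have hstar : star (-(Complex.I * (τ:ℂ))) = Complex.I * τ := by
    rw [star_neg, Complex.star_def, _root_.map_mul, Complex.conj_I, Complex.conj_ofReal]
    ring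
  have hskewA : ((-(Complex.I * (τ:ℂ))) • A)ᴴ = -((-(Complex.I * (τ:ℂ))) • A) := by
    rw [Matrix.conjTranspose_smul, hA.eq, hstar, ← neg_smul, neg_neg]
  have hskewB : ((-(Complex.I * (τ:ℂ))) • B)ᴴ = -((-(Complex.I * (τ:ℂ))) • B) := by
    rw [Matrix.conjTranspose_smul, hB.eq, hstar, ← neg_smul, neg_neg]
  have hUA := exp_skew_unitary _ hskewA
  have hUB := exp_skew_unitary _ hskewB
  have hblk := hexp τ
  constructor
  · rintro ⟨g, hg, hvec⟩
    exact ⟨g, hg, pst_transfer _ _ hUB hblk u v g hg hvec⟩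
  · rintro ⟨g, hg, hvec⟩
    exact ⟨g, hg, pst_transfer _ _ hUA hblk.symm u v g hg hvec⟩
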